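/- Let p₁, p₂, p₃ ≥ 1 and q₁, q₂, q₃ be integers with gcd(pᵢ, qᵢ) = 1 for each i, D := q₁p₂p₃ + p₁q₂p₃ + p₁p₂q₃ ≠ 0, and suppose gcd(p₁, p₂) = 1 and gcd(p₁, p₃) = 1. Then every quadruple (ζ_h, ζ₁, ζ₂, ζ₃) ∈ (ℂˣ)⁴ satisfying ζᵢ^{pᵢ} · ζ_h^{qᵢ} = 1 for i = 1, 2, 3, ζ₁ζ₂ζ₃ = 1, and ζ_h² = 1 also satisfies ζ₁² = 1. -/
import Mathlib


/-- Weakly coprime case (Proposition 5.6): if `gcd(p₁, p₂) = gcd(p₁, p₃) = 1`, every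
quadruple `(ζ_h, ζ₁, ζ₂, ζ₃)` in `(ℂˣ)⁴` with `ζᵢ^{pᵢ} ζ_h^{qᵢ} = 1`, `ζ₁ζ₂ζ₃ = 1`,
`ζ_h² = 1` satisfies `ζ₁² = 1`. -/
theorem stmt_6 (p₁ p₂ p₃ q₁ q₂ q₃ : ℤ)
    (hp₁ : 1 ≤ p₁) (hp₂ : 1 ≤ p₂) (hp₃ : 1 ≤ p₃)
    (hco₁ : Int.gcd p₁ q₁ = 1) (hco₂ : Int.gcd p₂ q₂ = 1) (hco₃ : Int.gcd p₃ q₃ = 1)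
    (hD : q₁ * p₂ * p₃ + p₁ * q₂ * p₃ + p₁ * p₂ * q₃ ≠ 0)
    (h12 : Int.gcd p₁ p₂ = 1) (h13 : Int.gcd p₁ p₃ = 1)
    (ζh ζ₁ ζ₂ ζ₃ : ℂˣ)
    (h1 : ζ₁ ^ p₁ * ζh ^ q₁ = 1) (h2 : ζ₂ ^ p₂ * ζh ^ q₂ = 1)
    (h3 : ζ₃ ^ p₃ * ζh ^ q₃ = 1) (hprod : ζ₁ * ζ₂ * ζ₃ = 1)
    (hh : ζh ^ 2 = 1) :
    ζ₁ ^ 2 = 1 := by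
  -- any even power of ζh (or its inverse) is 1
  have hh' : ∀ k : ℤ, ζh ^ (2 * k) = 1 := by
    intro k
    have h2' : ζh ^ (2 : ℤ) = 1 := by
      rw [show (2 : ℤ) = ((2 : ℕ) : ℤ) from rfl, zpow_natCast, hh]
    rw [zpow_mul, h2', one_zpow]
  have hh'' : ∀ k : ℤ, (ζh⁻¹) ^ (2 * k) = 1 := by
    intro k; rw [inv_zpow, hh', inv_one]
  have e1 : ζ₁ ^ p₁ = (ζh ^ q₁)⁻¹ := eq_inv_of_mul_eq_one_left h1
  have e2 : ζ₂ ^ p₂ = (ζh ^ q₂)⁻¹ := eq_inv_of_mul_eq_one_left h2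
  have e3 : ζ₃ ^ p₃ = (ζh ^ q₃)⁻¹ := eq_inv_of_mul_eq_one_left h3
  -- ζ₁ ^ (2 p₁) = 1
  have hA : ζ₁ ^ (2 * p₁) = 1 := by
    rw [mul_comm, zpow_mul, e1, ← zpow_neg, ← zpow_mul,
      show -q₁ * 2 = 2 * (-q₁) by ring, hh']
  -- ζ₂ ^ (2 p₂ p₃) = 1 and ζ₃ ^ (2 p₂ p₃) = 1
  have hB2 : ζ₂ ^ (2 * (p₂ * p₃)) = 1 := by
    rw [show 2 * (p₂ * p₃) = p₂ * (2 * p₃) by ring, zpow_mul, e2, ← zpow_neg, ← zpow_mul,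
      show -q₂ * (2 * p₃) = 2 * (-q₂ * p₃) by ring, hh']
  have hB3 : ζ₃ ^ (2 * (p₂ * p₃)) = 1 := by
    rw [show 2 * (p₂ * p₃) = p₃ * (2 * p₂) by ring, zpow_mul, e3, ← zpow_neg, ← zpow_mul,
      show -q₃ * (2 * p₂) = 2 * (-q₃ * p₂) by ring, hh']
  -- hence ζ₁ ^ (2 p₂ p₃) = 1
  have e0 : ζ₁ = (ζ₂ * ζ₃)⁻¹ := eq_inv_of_mul_eq_one_left (by rwa [← mul_assoc])
  have hB : ζ₁ ^ (2 * (p₂ * p₃)) = 1 := by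
    rw [e0, inv_zpow, mul_zpow, hB2, hB3, mul_one, inv_one]
  -- Bezout for gcd(p₁, p₂ p₃) = 1
  have hco : IsCoprime p₁ (p₂ * p₃) := by
    rw [Int.isCoprime_iff_gcd_eq_one]
    have : Nat.Coprime p₁.natAbs (p₂.natAbs * p₃.natAbs) := Nat.Coprime.mul_right h12 h13
    simpa [Int.gcd, Int.natAbs_mul] using this
  obtain ⟨a, b, hab⟩ := hco
  have key : ζ₁ ^ (2 : ℤ) = 1 := by
    have h5 : ζ₁ ^ (2 : ℤ) = (ζ₁ ^ (2 * p₁)) ^ a * (ζ₁ ^ (2 * (p₂ * p₃))) ^ b := by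
      rw [← zpow_mul, ← zpow_mul, ← zpow_add]
      congr 1
      nlinarith [hab]
    rw [h5, hA, hB, one_zpow, one_zpow, mul_one]
  rw [show (2 : ℤ) = ((2 : ℕ) : ℤ) from rfl, zpow_natCast] at key
  exact key
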